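/- Assume sup_{ℓ≥1} ℓ|a_ℓ| < ∞, ∑_{ℓ≥1} |a_ℓ| < ∞, a₁ > 0, and a_ℓ ≠ a₁ for every ℓ ≥ 2. Then there exist D₁ > 0, D₂ > 0, η > 0 and δ ∈ (0, 2/a₁) such that for every κ ∈ [2/a₁ − δ, 2/a₁ + δ] and every x ∈ ℓ²_w with ‖x‖_w ≤ η solving the stationary Fourier system at κ, one has for every ℓ ≥ 1: (i) |x_ℓ| ≤ (D₁/ℓ)(D₂|x₁|)^ℓ, and (ii) |ℓ(2 − κ a_ℓ) x_ℓ − κ ∑_{j=1}^{ℓ−1} j a_j x_j x_{ℓ−j}| ≤ D₁ (D₂|x₁|)^{ℓ+2}. -/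

import Mathlib

open scoped BigOperators
open Filter Topology Real

noncomputable section

/-- `x` solves the stationary Fourier system at intensity `κ` for coefficients `a`:
for every `ℓ ≥ 1` the tail series converges absolutely (equivalently, is `Summable` in `ℝ`) and
`ℓ(2 − κ a_ℓ) x_ℓ = κ ∑_{j=1}^{ℓ−1} j a_j x_j x_{ℓ−j}
  + κ ∑_{j=ℓ+1}^∞ (j a_j − (j−ℓ) a_{j−ℓ}) x_j x_{j−ℓ}`,
where the infinite sum is indexed by `j = ℓ + k + 1`, `k : ℕ`. -/
def SolvesMV (a : ℕ → ℝ) (κ : ℝ) (x : ℕ → ℝ) : Prop :=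
  ∀ ℓ : ℕ, 1 ≤ ℓ →
    Summable (fun k : ℕ =>
      (((ℓ + k + 1 : ℕ) : ℝ) * a (ℓ + k + 1) - ((k + 1 : ℕ) : ℝ) * a (k + 1))
        * x (ℓ + k + 1) * x (k + 1)) ∧
    (ℓ : ℝ) * (2 - κ * a ℓ) * x ℓ
      = κ * ∑ j ∈ Finset.Ico 1 ℓ, (j : ℝ) * a j * x j * x (ℓ - j)
        + κ * ∑' k : ℕ,
            (((ℓ + k + 1 : ℕ) : ℝ) * a (ℓ + k + 1) - ((k + 1 : ℕ) : ℝ) * a (k + 1))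
              * x (ℓ + k + 1) * x (k + 1)

/-- The squared weighted norm `∑_{ℓ≥1} (1+ℓ²) x_ℓ²`. -/
def wnormSq (x : ℕ → ℝ) : ℝ := ∑' ℓ : ℕ, (1 + ((ℓ + 1 : ℕ) : ℝ) ^ 2) * x (ℓ + 1) ^ 2

/-- The weighted norm `‖x‖_w = (∑_{ℓ≥1} (1+ℓ²) x_ℓ²)^{1/2}`. -/
def wnorm (x : ℕ → ℝ) : ℝ := Real.sqrt (wnormSq x)

/-- Membership in the weighted space `ℓ²_w`. -/
def MemL2w (x : ℕ → ℝ) : Prop :=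
  Summable fun ℓ : ℕ => (1 + ((ℓ + 1 : ℕ) : ℝ) ^ 2) * x (ℓ + 1) ^ 2

-- auxiliary: ∑_{m} 1/(m+2)^2 ≤ 1
lemma aux_summable_inv_sq : Summable (fun m : ℕ => (1:ℝ) / ((m:ℝ) + 2) ^ 2) := by
  have h : Summable (fun n : ℕ => (1:ℝ) / (n:ℝ) ^ 2) :=
    summable_one_div_nat_pow.mpr (by norm_num)
  have := (summable_nat_add_iff 2).mpr h
  refine this.congr ?_
  intro n; push_cast; ring_nf

lemma aux_summable_inv_sq1 : Summable (fun m : ℕ => (1:ℝ) / ((m:ℝ) + 1) ^ 2) := by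
  have h : Summable (fun n : ℕ => (1:ℝ) / (n:ℝ) ^ 2) :=
    summable_one_div_nat_pow.mpr (by norm_num)
  have := (summable_nat_add_iff 1).mpr h
  refine this.congr ?_
  intro n; push_cast; ring_nf

lemma aux_sum_inv_sq_le : ∑' m : ℕ, (1:ℝ) / ((m:ℝ) + 2) ^ 2 ≤ 1 := by
  refine tsum_le_of_sum_range_le (fun n => by positivity) ?_
  intro n
  have key : ∀ N : ℕ, ∑ m ∈ Finset.range N, (1:ℝ) / ((m:ℝ) + 2) ^ 2 ≤ 1 - 1 / ((N:ℝ) + 1) := by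
    intro N
    induction N with
    | zero => simp
    | succ N ih =>
      rw [Finset.sum_range_succ]
      have h1 : (0:ℝ) < (N:ℝ) + 1 := by positivity
      have h2 : (0:ℝ) < (N:ℝ) + 2 := by positivity
      have : (1:ℝ) / ((N:ℝ) + 2) ^ 2 ≤ 1 / ((N:ℝ)+1) - 1 / ((N:ℝ)+2) := by
        rw [div_sub_div _ _ (ne_of_gt h1) (ne_of_gt h2)]
        rw [div_le_div_iff₀ (by positivity) (by positivity)]
        ring_nf
        nlinarith [sq_nonneg ((N:ℝ)+1)]
      have hc : ((N:ℕ):ℝ) + 1 + 1 = (N:ℝ) + 2 := by push_cast; ring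
      push_cast
      rw [show (N:ℝ) + 1 + 1 = (N:ℝ) + 2 by ring] at *
      linarith [ih]
  have := key n
  have h1 : (0:ℝ) < (n:ℝ) + 1 := by positivity
  have : (1:ℝ) - 1/((n:ℝ)+1) ≤ 1 := by
    have : 0 < 1/((n:ℝ)+1) := by positivity
    linarith
  linarith [key n]

set_option maxHeartbeats 8000000 in
/-- geometric-decay estimates for small solutions near `κ₁ = 2/a₁` when
`a₁ > 0` is a simple top mode and `∑|a_ℓ| < ∞`. -/
theorem geometric_decay_estimates
    (a : ℕ → ℝ) (hA : ∃ C : ℝ, ∀ ℓ : ℕ, 1 ≤ ℓ → (ℓ : ℝ) * |a ℓ| ≤ C)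
    (hsum : Summable fun ℓ : ℕ => |a (ℓ + 1)|)
    (h1 : 0 < a 1) (hne : ∀ ℓ : ℕ, 2 ≤ ℓ → a ℓ ≠ a 1) :
    ∃ D₁ : ℝ, 0 < D₁ ∧ ∃ D₂ : ℝ, 0 < D₂ ∧ ∃ η : ℝ, 0 < η ∧
      ∃ δ : ℝ, 0 < δ ∧ δ < 2 / a 1 ∧
      ∀ κ : ℝ, 2 / a 1 - δ ≤ κ → κ ≤ 2 / a 1 + δ →
        ∀ x : ℕ → ℝ, MemL2w x → wnorm x ≤ η → SolvesMV a κ x →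
          ∀ ℓ : ℕ, 1 ≤ ℓ →
            |x ℓ| ≤ (D₁ / (ℓ : ℝ)) * (D₂ * |x 1|) ^ ℓ ∧
            |(ℓ : ℝ) * (2 - κ * a ℓ) * x ℓ
                - κ * ∑ j ∈ Finset.Ico 1 ℓ, (j : ℝ) * a j * x j * x (ℓ - j)|
              ≤ D₁ * (D₂ * |x 1|) ^ (ℓ + 2) := by
  classical
  obtain ⟨C₀, hC₀⟩ := hA
  set κ₁ : ℝ := 2 / a 1 with hκ₁def
  have hκ₁pos : 0 < κ₁ := div_pos two_pos h1
  set C : ℝ := max C₀ 1 with hCdef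
  have hC1 : (1:ℝ) ≤ C := le_max_right _ _
  have hCpos : (0:ℝ) < C := lt_of_lt_of_le one_pos hC1
  have hCa : ∀ ℓ : ℕ, 1 ≤ ℓ → (ℓ : ℝ) * |a ℓ| ≤ C :=
    fun ℓ hℓ => (hC₀ ℓ hℓ).trans (le_max_left _ _)
  have hCa' : ∀ ℓ : ℕ, 1 ≤ ℓ → |a ℓ| ≤ C := by
    intro ℓ hℓ
    have h1ℓ : (1:ℝ) ≤ (ℓ:ℝ) := by exact_mod_cast hℓ
    calc |a ℓ| = 1 * |a ℓ| := (one_mul _).symm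
      _ ≤ (ℓ:ℝ) * |a ℓ| := by
          apply mul_le_mul_of_nonneg_right h1ℓ (abs_nonneg _)
      _ ≤ C := hCa ℓ hℓ
  -- threshold N₀
  set N₀ : ℕ := max 2 (⌈2*κ₁*C⌉₊) with hN₀def
  -- min over the finite low-frequency set
  obtain ⟨c₀, hc₀pos, hc₀le1, hc₀⟩ :
      ∃ c₀ : ℝ, 0 < c₀ ∧ c₀ ≤ 1 ∧ ∀ ℓ ∈ Finset.Ico 2 N₀, c₀ ≤ |2 - κ₁ * a ℓ| := by
    rcases (Finset.Ico 2 N₀).eq_empty_or_nonempty with h | h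
    · exact ⟨1, one_pos, le_refl 1, by simp [h]⟩
    · obtain ⟨ℓ₀, hℓ₀mem, hmin⟩ := Finset.exists_min_image _ (fun ℓ => |2 - κ₁ * a ℓ|) h
      have hℓ₀2 : 2 ≤ ℓ₀ := (Finset.mem_Ico.mp hℓ₀mem).1
      have hne0 : 2 - κ₁ * a ℓ₀ ≠ 0 := by
        intro hz
        apply hne ℓ₀ hℓ₀2
        have ha1 : a 1 ≠ 0 := ne_of_gt h1
        have hκ₁a : κ₁ = 2 / a 1 := hκ₁def
        have : a ℓ₀ = 2 / κ₁ := by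
          field_simp at hz ⊢
          linarith
        rw [this, hκ₁a]
        field_simp
      have hpos0 : 0 < |2 - κ₁ * a ℓ₀| := abs_pos.mpr hne0
      refine ⟨min 1 |2 - κ₁ * a ℓ₀|, lt_min one_pos hpos0, min_le_left _ _, fun ℓ hℓ => ?_⟩
      exact (min_le_right _ _).trans (hmin ℓ hℓ)
  set c : ℝ := c₀ / 2 with hcdef
  have hcpos : 0 < c := by positivity
  have hcle : c ≤ 1 := by
    rw [hcdef]; linarith
  set δ : ℝ := min (κ₁/2) (c₀/(2*C)) with hδdef
  have hδpos : 0 < δ := lt_min (by positivity) (by positivity)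
  have hδlt : δ < κ₁ := lt_of_le_of_lt (min_le_left _ _) (by linarith)
  -- the spectral gap
  have hgap : ∀ κ : ℝ, κ₁ - δ ≤ κ → κ ≤ κ₁ + δ → ∀ ℓ : ℕ, 2 ≤ ℓ → c ≤ |2 - κ * a ℓ| := by
    intro κ hκl hκr ℓ hℓ
    by_cases hcase : N₀ ≤ ℓ
    · -- large ℓ: |κ a ℓ| ≤ 1
      have hℓpos : (0:ℝ) < (ℓ:ℝ) := by positivity
      have hℓ1 : 1 ≤ ℓ := le_trans (by norm_num) hℓ
      have hκpos : 0 ≤ κ := by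
        have : κ₁ - δ ≥ 0 := by linarith [hδlt]
        linarith
      have hκ2 : κ ≤ 2*κ₁ := by
        have : δ ≤ κ₁/2 := min_le_left _ _
        linarith
      have hNℓ : 2*κ₁*C ≤ (ℓ:ℝ) := by
        have h1' : (⌈2*κ₁*C⌉₊ : ℝ) ≤ (ℓ:ℝ) := by
          exact_mod_cast le_trans (le_max_right 2 _) hcase
        exact le_trans (Nat.le_ceil _) h1'
      have haℓ : |a ℓ| ≤ C / (ℓ:ℝ) := by
        rw [le_div_iff₀ hℓpos]
        calc |a ℓ| * (ℓ:ℝ) = (ℓ:ℝ) * |a ℓ| := by ring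
          _ ≤ C := hCa ℓ hℓ1
      have hκa : |κ * a ℓ| ≤ 1 := by
        rw [abs_mul]
        have h2 : |κ| ≤ 2*κ₁ := by
          rw [abs_of_nonneg hκpos]; exact hκ2
        calc |κ| * |a ℓ| ≤ (2*κ₁) * (C / (ℓ:ℝ)) := by
              apply mul_le_mul h2 haℓ (abs_nonneg _) (by positivity)
          _ = (2*κ₁*C) / (ℓ:ℝ) := by ring
          _ ≤ 1 := by
              rw [div_le_one hℓpos]; exact hNℓ
      calc c ≤ 1 := hcle
        _ ≤ |2 - κ * a ℓ| := by
            have := abs_le.mp hκa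
            rw [abs_sub_comm]
            rcases abs_cases (κ * a ℓ - 2) with ⟨h, _⟩ | ⟨h, _⟩ <;> linarith
    · -- small ℓ: use c₀
      push_neg at hcase
      have hmem : ℓ ∈ Finset.Ico 2 N₀ := Finset.mem_Ico.mpr ⟨hℓ, hcase⟩
      have h2κ : c₀ ≤ |2 - κ₁ * a ℓ| := hc₀ ℓ hmem
      have hδC : δ * C ≤ c₀ / 2 := by
        have : δ ≤ c₀ / (2*C) := min_le_right _ _
        calc δ * C ≤ (c₀/(2*C)) * C := by
              apply mul_le_mul_of_nonneg_right this (le_of_lt hCpos)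
          _ = c₀/2 := by field_simp
      have haℓ : |a ℓ| ≤ C := hCa' ℓ (le_trans (by norm_num) hℓ)
      have hdiff : |κ₁ * a ℓ - κ * a ℓ| ≤ c₀/2 := by
        rw [show κ₁ * a ℓ - κ * a ℓ = (κ₁ - κ) * a ℓ by ring, abs_mul]
        have hκκ : |κ₁ - κ| ≤ δ := by
          rw [abs_le]; constructor <;> linarith
        calc |κ₁ - κ| * |a ℓ| ≤ δ * C :=
              mul_le_mul hκκ haℓ (abs_nonneg _) (le_of_lt hδpos)
          _ ≤ c₀/2 := hδC
      calc c = c₀ - c₀/2 := by rw [hcdef]; ring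
        _ ≤ |2 - κ₁ * a ℓ| - |κ₁ * a ℓ - κ * a ℓ| := by linarith
        _ ≤ |2 - κ * a ℓ| := by
            have h4 := abs_sub_abs_le_abs_sub (2 - κ₁ * a ℓ) (2 - κ * a ℓ)
            have h5 : |(2 - κ₁ * a ℓ) - (2 - κ * a ℓ)| = |κ₁ * a ℓ - κ * a ℓ| := by
              rw [show (2 - κ₁ * a ℓ) - (2 - κ * a ℓ) = -(κ₁ * a ℓ - κ * a ℓ) by ring, abs_neg]
            rw [h5] at h4
            linarith
  -- constants
  set B : ℝ := c / (8*κ₁*C) with hBdef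
  have hBpos : 0 < B := by positivity
  set D : ℝ := 16*κ₁*C/c with hDdef
  have hDpos : 0 < D := by positivity
  have hBD : B * D = 2 := by
    rw [hBdef, hDdef]; field_simp; ring
  set η : ℝ := min (1/(2*D)) (c/(24*κ₁*C)) with hηdef
  have hηpos : 0 < η := lt_min (by positivity) (by positivity)
  have hη1 : η ≤ 1/(2*D) := min_le_left _ _
  have hη2 : η ≤ c/(24*κ₁*C) := min_le_right _ _
  set D₁ : ℝ := B + 8*κ₁*C*B^2 with hD₁def
  have hD₁pos : 0 < D₁ := by positivity
  have hBD₁ : B ≤ D₁ := by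
    have h8 : (0:ℝ) ≤ 8*κ₁*C*B^2 := by positivity
    rw [hD₁def]; linarith
  have hδle : δ ≤ κ₁/2 := min_le_left _ _
  clear_value c δ B D η D₁
  refine ⟨D₁, hD₁pos, D, hDpos, η, hηpos, δ, hδpos, hδlt, ?_⟩
  intro κ hκl hκr x hmem hwx hsol
  have hκpos : 0 < κ := by
    linarith [hδle]
  have hκ2 : κ ≤ 2*κ₁ := by
    linarith [hδle]
  have hgapκ : ∀ ℓ : ℕ, 2 ≤ ℓ → c ≤ |2 - κ * a ℓ| := hgap κ hκl hκr
  -- basic facts about x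
  have hwSqnn : ∀ m : ℕ, (0:ℝ) ≤ (1 + ((m + 1 : ℕ) : ℝ) ^ 2) * x (m + 1) ^ 2 := by
    intro m; positivity
  have hwSq_le : wnormSq x ≤ η^2 := by
    have h0 : 0 ≤ wnormSq x := tsum_nonneg hwSqnn
    have hs := hwx
    rw [wnorm] at hs
    calc wnormSq x = (Real.sqrt (wnormSq x))^2 := (Real.sq_sqrt h0).symm
      _ ≤ η^2 := by
          apply pow_le_pow_left₀ (Real.sqrt_nonneg _) hs
  -- pointwise bound m * |x m| ≤ η for m ≥ 1
  have hpt : ∀ m : ℕ, 1 ≤ m → (m:ℝ) * |x m| ≤ η := by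
    intro m hm
    obtain ⟨m', rfl⟩ : ∃ m', m = m' + 1 := ⟨m - 1, by omega⟩
    have hle : (1 + ((m' + 1 : ℕ) : ℝ) ^ 2) * x (m' + 1) ^ 2 ≤ wnormSq x :=
      Summable.le_tsum hmem m' (fun j _ => hwSqnn j)
    have hsq : (((m' + 1 : ℕ):ℝ) * |x (m' + 1)|)^2 ≤ η^2 := by
      have h2 : (((m' + 1 : ℕ):ℝ) * |x (m' + 1)|)^2
          = ((m' + 1 : ℕ):ℝ)^2 * x (m' + 1) ^ 2 := by
        rw [mul_pow, sq_abs]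
      rw [h2]
      nlinarith [sq_nonneg (x (m' + 1)), hle, hwSq_le]
    have hnn : (0:ℝ) ≤ ((m' + 1 : ℕ):ℝ) * |x (m' + 1)| := by positivity
    nlinarith [hsq, hnn, hηpos]
  have hptx : ∀ m : ℕ, 1 ≤ m → |x m| ≤ η := by
    intro m hm
    have h1m : (1:ℝ) ≤ (m:ℝ) := by exact_mod_cast hm
    calc |x m| = 1 * |x m| := (one_mul _).symm
      _ ≤ (m:ℝ) * |x m| := mul_le_mul_of_nonneg_right h1m (abs_nonneg _)
      _ ≤ η := hpt m hm
  -- summability of |x|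
  have hsxa : Summable (fun m : ℕ => |x (m + 1)|) := by
    apply Summable.of_nonneg_of_le (fun m => abs_nonneg _)
      (g := fun m => |x (m+1)|)
      (f := fun m => (1 + ((m + 1 : ℕ) : ℝ) ^ 2) * x (m + 1) ^ 2 + 1/((m:ℝ)+1)^2)
    · intro m
      have hA : (0:ℝ) < 1 + ((m + 1 : ℕ) : ℝ) ^ 2 := by positivity
      have key : |x (m+1)| ≤ (1 + ((m + 1 : ℕ) : ℝ) ^ 2) * x (m + 1) ^ 2
          + 1/(1 + ((m + 1 : ℕ) : ℝ) ^ 2) := by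
        set A : ℝ := 1 + ((m + 1 : ℕ) : ℝ) ^ 2 with hAdef
        have hkey : A * |x (m+1)| ≤ A^2 * x (m+1)^2 + 1 := by
          nlinarith [sq_nonneg (A * |x (m+1)| - 1), sq_abs (x (m+1)), abs_nonneg (x (m+1)), hA]
        have heqA : A * (A * x (m+1)^2 + 1/A) = A^2 * x (m+1)^2 + 1 := by
          field_simp
        have h5 : A * |x (m+1)| ≤ A * (A * x (m+1)^2 + 1/A) := by
          rw [heqA]; exact hkey
        exact le_of_mul_le_mul_left h5 hA
      refine key.trans ?_
      have hcmp : 1/(1 + ((m + 1 : ℕ) : ℝ) ^ 2) ≤ 1/((m:ℝ)+1)^2 := by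
        apply div_le_div_of_nonneg_left one_pos.le (by positivity)
        push_cast
        nlinarith [sq_nonneg ((m:ℝ)+1)]
      exact add_le_add le_rfl hcmp
    · exact hmem.add aux_summable_inv_sq1
  -- the ℓ¹ norm
  set S : ℝ := ∑' m : ℕ, |x (m + 1)| with hSdef
  clear_value S
  have hS0 : 0 ≤ S := by rw [hSdef]; exact tsum_nonneg (fun m => abs_nonneg _)
  have hiS : ∀ m : ℕ, 1 ≤ m → |x m| ≤ S := by
    intro m hm
    obtain ⟨m', rfl⟩ : ∃ m', m = m' + 1 := ⟨m - 1, by omega⟩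
    rw [hSdef]
    exact Summable.le_tsum hsxa m' (fun j _ => abs_nonneg _)
  have hfin : ∀ ℓ : ℕ, ∑ j ∈ Finset.Ico 1 ℓ, |x j| ≤ S := by
    intro ℓ
    rw [Finset.sum_Ico_eq_sum_range]
    have : ∀ k ∈ Finset.range (ℓ - 1), |x (1 + k)| = |x (k + 1)| := by
      intro k _; rw [Nat.add_comm]
    rw [Finset.sum_congr rfl this, hSdef]
    exact Summable.sum_le_tsum _ (fun j _ => abs_nonneg _) hsxa
  have hrefl : ∀ ℓ : ℕ, 2 ≤ ℓ →
      ∑ j ∈ Finset.Ico 1 ℓ, |x (ℓ - j)| = ∑ j ∈ Finset.Ico 1 ℓ, |x j| := by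
    intro ℓ hℓ
    rw [Finset.sum_Ico_eq_sum_range, Finset.sum_Ico_eq_sum_range]
    rw [← Finset.sum_range_reflect (fun k => |x (1 + k)|) (ℓ - 1)]
    apply Finset.sum_congr rfl
    intro k hk
    rw [Finset.mem_range] at hk
    have h : ℓ - (1 + k) = 1 + (ℓ - 1 - 1 - k) := by omega
    rw [h]
  -- summability of tail products
  have htsum : ∀ ℓ : ℕ, 1 ≤ ℓ → Summable (fun k : ℕ => |x (ℓ + k + 1)| * |x (k + 1)|) := by
    intro ℓ hℓ
    apply Summable.of_nonneg_of_le (fun k => mul_nonneg (abs_nonneg _) (abs_nonneg _))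
      (f := fun k => η * |x (k + 1)|)
    · intro k
      apply mul_le_mul_of_nonneg_right (hptx (ℓ + k + 1) (by omega)) (abs_nonneg _)
    · exact hsxa.mul_left η
  -- bound on the abs tail series
  have htail : ∀ ℓ : ℕ, 1 ≤ ℓ →
      |∑' k : ℕ, (((ℓ + k + 1 : ℕ) : ℝ) * a (ℓ + k + 1) - ((k + 1 : ℕ) : ℝ) * a (k + 1))
        * x (ℓ + k + 1) * x (k + 1)|
      ≤ 2 * C * ∑' k : ℕ, |x (ℓ + k + 1)| * |x (k + 1)| := by
    intro ℓ hℓ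
    obtain ⟨hsml, _⟩ := hsol ℓ hℓ
    have habs : Summable (fun k : ℕ =>
        |(((ℓ + k + 1 : ℕ) : ℝ) * a (ℓ + k + 1) - ((k + 1 : ℕ) : ℝ) * a (k + 1))
          * x (ℓ + k + 1) * x (k + 1)|) := summable_abs_iff.mpr hsml
    have hterm : ∀ k : ℕ,
        |(((ℓ + k + 1 : ℕ) : ℝ) * a (ℓ + k + 1) - ((k + 1 : ℕ) : ℝ) * a (k + 1))
          * x (ℓ + k + 1) * x (k + 1)|
        ≤ 2 * C * (|x (ℓ + k + 1)| * |x (k + 1)|) := by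
      intro k
      rw [abs_mul, abs_mul]
      have hco : |(((ℓ + k + 1 : ℕ) : ℝ) * a (ℓ + k + 1) - ((k + 1 : ℕ) : ℝ) * a (k + 1))| ≤ 2 * C := by
        have h1' := hCa (ℓ + k + 1) (by omega)
        have h2' := hCa (k + 1) (by omega)
        have e1 : |((ℓ + k + 1 : ℕ) : ℝ) * a (ℓ + k + 1)| = ((ℓ + k + 1 : ℕ) : ℝ) * |a (ℓ + k + 1)| := by
          rw [abs_mul, Nat.abs_cast]
        have e2 : |((k + 1 : ℕ) : ℝ) * a (k + 1)| = ((k + 1 : ℕ) : ℝ) * |a (k + 1)| := by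
          rw [abs_mul, Nat.abs_cast]
        calc |(((ℓ + k + 1 : ℕ) : ℝ) * a (ℓ + k + 1) - ((k + 1 : ℕ) : ℝ) * a (k + 1))|
            ≤ |((ℓ + k + 1 : ℕ) : ℝ) * a (ℓ + k + 1)| + |((k + 1 : ℕ) : ℝ) * a (k + 1)| :=
              abs_sub _ _
          _ ≤ C + C := by rw [e1, e2]; exact add_le_add h1' h2'
          _ = 2 * C := by ring
      calc |(((ℓ + k + 1 : ℕ) : ℝ) * a (ℓ + k + 1) - ((k + 1 : ℕ) : ℝ) * a (k + 1))|
            * |x (ℓ + k + 1)| * |x (k + 1)|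
          ≤ (2*C) * |x (ℓ + k + 1)| * |x (k + 1)| := by
            apply mul_le_mul_of_nonneg_right _ (abs_nonneg _)
            exact mul_le_mul_of_nonneg_right hco (abs_nonneg _)
        _ = 2 * C * (|x (ℓ + k + 1)| * |x (k + 1)|) := by ring
    calc |∑' k : ℕ, (((ℓ + k + 1 : ℕ) : ℝ) * a (ℓ + k + 1) - ((k + 1 : ℕ) : ℝ) * a (k + 1))
          * x (ℓ + k + 1) * x (k + 1)|
        ≤ ∑' k : ℕ, |(((ℓ + k + 1 : ℕ) : ℝ) * a (ℓ + k + 1) - ((k + 1 : ℕ) : ℝ) * a (k + 1))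
          * x (ℓ + k + 1) * x (k + 1)| := by
          have h6 := norm_tsum_le_tsum_norm
            (f := fun k : ℕ => (((ℓ + k + 1 : ℕ) : ℝ) * a (ℓ + k + 1)
              - ((k + 1 : ℕ) : ℝ) * a (k + 1)) * x (ℓ + k + 1) * x (k + 1))
            (by simpa only [Real.norm_eq_abs] using habs)
          simpa only [Real.norm_eq_abs] using h6
      _ ≤ ∑' k : ℕ, 2 * C * (|x (ℓ + k + 1)| * |x (k + 1)|) :=
          Summable.tsum_le_tsum hterm habs ((htsum ℓ hℓ).mul_left _)
      _ = 2 * C * ∑' k : ℕ, |x (ℓ + k + 1)| * |x (k + 1)| := tsum_mul_left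
  -- the key inequality from the equation
  have hkey : ∀ ℓ : ℕ, 2 ≤ ℓ →
      c * ((ℓ:ℝ) * |x ℓ|) ≤
        κ * (C * ∑ j ∈ Finset.Ico 1 ℓ, |x j| * |x (ℓ - j)|)
          + κ * (2 * C * ∑' k : ℕ, |x (ℓ + k + 1)| * |x (k + 1)|) := by
    intro ℓ hℓ
    obtain ⟨hsml, heq⟩ := hsol ℓ (by omega)
    have hlow : |∑ j ∈ Finset.Ico 1 ℓ, (j : ℝ) * a j * x j * x (ℓ - j)|
        ≤ C * ∑ j ∈ Finset.Ico 1 ℓ, |x j| * |x (ℓ - j)| := by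
      calc |∑ j ∈ Finset.Ico 1 ℓ, (j : ℝ) * a j * x j * x (ℓ - j)|
          ≤ ∑ j ∈ Finset.Ico 1 ℓ, |(j : ℝ) * a j * x j * x (ℓ - j)| :=
            Finset.abs_sum_le_sum_abs _ _
        _ ≤ ∑ j ∈ Finset.Ico 1 ℓ, C * (|x j| * |x (ℓ - j)|) := by
            apply Finset.sum_le_sum
            intro j hj
            rw [Finset.mem_Ico] at hj
            have hj1 : 1 ≤ j := hj.1
            rw [abs_mul, abs_mul, abs_mul, Nat.abs_cast]
            have hja : (j:ℝ) * |a j| ≤ C := hCa j hj1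
            calc (j:ℝ) * |a j| * |x j| * |x (ℓ - j)|
                ≤ C * |x j| * |x (ℓ - j)| := by
                  apply mul_le_mul_of_nonneg_right _ (abs_nonneg _)
                  exact mul_le_mul_of_nonneg_right hja (abs_nonneg _)
              _ = C * (|x j| * |x (ℓ - j)|) := by ring
        _ = C * ∑ j ∈ Finset.Ico 1 ℓ, |x j| * |x (ℓ - j)| := by rw [Finset.mul_sum]
    have hLHS : c * ((ℓ:ℝ) * |x ℓ|) ≤ |(ℓ : ℝ) * (2 - κ * a ℓ) * x ℓ| := by
      rw [abs_mul, abs_mul, Nat.abs_cast]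
      have hgℓ : c ≤ |2 - κ * a ℓ| := hgapκ ℓ hℓ
      have : (ℓ:ℝ) * |2 - κ * a ℓ| * |x ℓ| = ((ℓ:ℝ) * |x ℓ|) * |2 - κ * a ℓ| := by ring
      rw [this]
      calc c * ((ℓ:ℝ) * |x ℓ|) = ((ℓ:ℝ) * |x ℓ|) * c := by ring
        _ ≤ ((ℓ:ℝ) * |x ℓ|) * |2 - κ * a ℓ| := by
            apply mul_le_mul_of_nonneg_left hgℓ (by positivity)
    calc c * ((ℓ:ℝ) * |x ℓ|) ≤ |(ℓ : ℝ) * (2 - κ * a ℓ) * x ℓ| := hLHS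
      _ = |κ * ∑ j ∈ Finset.Ico 1 ℓ, (j : ℝ) * a j * x j * x (ℓ - j)
            + κ * ∑' k : ℕ, (((ℓ + k + 1 : ℕ) : ℝ) * a (ℓ + k + 1) - ((k + 1 : ℕ) : ℝ) * a (k + 1))
              * x (ℓ + k + 1) * x (k + 1)| := by rw [heq]
      _ ≤ |κ * ∑ j ∈ Finset.Ico 1 ℓ, (j : ℝ) * a j * x j * x (ℓ - j)|
          + |κ * ∑' k : ℕ, (((ℓ + k + 1 : ℕ) : ℝ) * a (ℓ + k + 1) - ((k + 1 : ℕ) : ℝ) * a (k + 1))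
              * x (ℓ + k + 1) * x (k + 1)| := abs_add_le _ _
      _ ≤ κ * (C * ∑ j ∈ Finset.Ico 1 ℓ, |x j| * |x (ℓ - j)|)
          + κ * (2 * C * ∑' k : ℕ, |x (ℓ + k + 1)| * |x (k + 1)|) := by
          rw [abs_mul, abs_mul, abs_of_pos hκpos]
          exact add_le_add (mul_le_mul_of_nonneg_left hlow (le_of_lt hκpos))
            (mul_le_mul_of_nonneg_left (htail ℓ (by omega)) (le_of_lt hκpos))
  -- notation
  set ε : ℝ := |x 1| with hεdef
  clear_value ε
  have hε0 : 0 ≤ ε := by rw [hεdef]; exact abs_nonneg _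
  have hεη : ε ≤ η := by rw [hεdef]; exact hptx 1 le_rfl
  -- STEP 1 : quadratic decay of individual modes
  have hx2 : ∀ ℓ : ℕ, 2 ≤ ℓ → c * ((ℓ:ℝ)^2 * |x ℓ|) ≤ 6*(κ*(C*(η*S))) := by
    intro ℓ hℓ
    have hℓpos : (0:ℝ) < (ℓ:ℝ) := by positivity
    have hlowb : ∑ j ∈ Finset.Ico 1 ℓ, |x j| * |x (ℓ - j)| ≤ 2*η/ℓ * (2*S) := by
      have hterm : ∀ j ∈ Finset.Ico 1 ℓ, |x j| * |x (ℓ - j)| ≤ 2*η/ℓ * (|x j| + |x (ℓ - j)|) := by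
        intro j hj
        rw [Finset.mem_Ico] at hj
        have hj1 : 1 ≤ j := hj.1
        have hjℓ : j < ℓ := hj.2
        have hmj1 : 1 ≤ ℓ - j := by omega
        have h2η : 0 ≤ 2*η/ℓ := div_nonneg (by linarith only [hηpos]) hℓpos.le
        by_cases hcase : ℓ ≤ 2*j
        · -- |x j| ≤ 2η/ℓ
          have hxj : |x j| ≤ 2*η/ℓ := by
            have h3 := hpt j hj1
            have hcast : (ℓ:ℝ) ≤ 2*(j:ℝ) := by exact_mod_cast hcase
            rw [le_div_iff₀ hℓpos]
            linarith only [h3, mul_le_mul_of_nonneg_left hcast (abs_nonneg (x j))]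
          calc |x j| * |x (ℓ - j)| ≤ (2*η/ℓ) * |x (ℓ - j)| :=
                mul_le_mul_of_nonneg_right hxj (abs_nonneg _)
            _ ≤ 2*η/ℓ * (|x j| + |x (ℓ - j)|) := by
                apply mul_le_mul_of_nonneg_left _ h2η
                linarith only [abs_nonneg (x j)]
        · -- |x (ℓ-j)| ≤ 2η/ℓ
          push_neg at hcase
          have hxmj : |x (ℓ - j)| ≤ 2*η/ℓ := by
            have h3 := hpt (ℓ - j) hmj1
            have hcast : (ℓ:ℝ) ≤ 2*(((ℓ - j:ℕ)):ℝ) := by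
              have : ℓ ≤ 2*(ℓ - j) := by omega
              exact_mod_cast this
            have hmjpos : (0:ℝ) < ((ℓ - j:ℕ):ℝ) := by
              have : (0:ℕ) < ℓ - j := by omega
              exact_mod_cast this
            rw [le_div_iff₀ hℓpos]
            linarith only [h3, mul_le_mul_of_nonneg_left hcast (abs_nonneg (x (ℓ - j)))]
          calc |x j| * |x (ℓ - j)| ≤ |x j| * (2*η/ℓ) :=
                mul_le_mul_of_nonneg_left hxmj (abs_nonneg _)
            _ ≤ 2*η/ℓ * (|x j| + |x (ℓ - j)|) := by
                rw [mul_comm]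
                apply mul_le_mul_of_nonneg_left _ h2η
                linarith only [abs_nonneg (x (ℓ - j))]
      calc ∑ j ∈ Finset.Ico 1 ℓ, |x j| * |x (ℓ - j)|
          ≤ ∑ j ∈ Finset.Ico 1 ℓ, 2*η/ℓ * (|x j| + |x (ℓ - j)|) := Finset.sum_le_sum hterm
        _ = 2*η/ℓ * (∑ j ∈ Finset.Ico 1 ℓ, |x j| + ∑ j ∈ Finset.Ico 1 ℓ, |x (ℓ - j)|) := by
            rw [← Finset.mul_sum, Finset.sum_add_distrib]
        _ = 2*η/ℓ * (∑ j ∈ Finset.Ico 1 ℓ, |x j| + ∑ j ∈ Finset.Ico 1 ℓ, |x j|) := by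
            rw [hrefl ℓ hℓ]
        _ ≤ 2*η/ℓ * (2*S) := by
            apply mul_le_mul_of_nonneg_left _ (div_nonneg (by linarith only [hηpos]) hℓpos.le)
            linarith only [hfin ℓ]
    have htailb : ∑' k : ℕ, |x (ℓ + k + 1)| * |x (k + 1)| ≤ η/ℓ * S := by
      have hterm : ∀ k : ℕ, |x (ℓ + k + 1)| * |x (k + 1)| ≤ (η/ℓ) * |x (k + 1)| := by
        intro k
        apply mul_le_mul_of_nonneg_right _ (abs_nonneg _)
        have h3 := hpt (ℓ + k + 1) (by omega)
        have hbig : (ℓ:ℝ) ≤ ((ℓ + k + 1:ℕ):ℝ) := by exact_mod_cast Nat.le_add_right ℓ (k+1)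
        rw [le_div_iff₀ hℓpos]
        linarith only [h3, mul_le_mul_of_nonneg_left hbig (abs_nonneg (x (ℓ + k + 1)))]
      calc ∑' k : ℕ, |x (ℓ + k + 1)| * |x (k + 1)|
          ≤ ∑' k : ℕ, (η/ℓ) * |x (k + 1)| :=
            Summable.tsum_le_tsum hterm (htsum ℓ (by omega)) (hsxa.mul_left _)
        _ = η/ℓ * S := by rw [tsum_mul_left, hSdef]
    have hk := hkey ℓ hℓ
    have hcomb : c * ((ℓ:ℝ) * |x ℓ|) ≤ κ*(C*(2*η/ℓ*(2*S))) + κ*(2*C*(η/ℓ*S)) := by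
      refine le_trans hk (add_le_add ?_ ?_)
      · exact mul_le_mul_of_nonneg_left (mul_le_mul_of_nonneg_left hlowb hCpos.le) hκpos.le
      · refine mul_le_mul_of_nonneg_left ?_ hκpos.le
        apply mul_le_mul_of_nonneg_left htailb (by positivity)
    have hrw : κ*(C*(2*η/ℓ*(2*S))) + κ*(2*C*(η/ℓ*S)) = 6*(κ*(C*(η*S))) / ℓ := by
      field_simp; ring
    rw [hrw] at hcomb
    calc c * ((ℓ:ℝ)^2 * |x ℓ|) = (c * ((ℓ:ℝ) * |x ℓ|)) * ℓ := by ring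
      _ ≤ (6*(κ*(C*(η*S))) / ℓ) * ℓ := by
          apply mul_le_mul_of_nonneg_right hcomb hℓpos.le
      _ = 6*(κ*(C*(η*S))) := by field_simp
  -- sum the quadratic decay : S ≤ 2 ε
  have hS2ε : S ≤ 2 * ε := by
    have hsx2 : Summable (fun m : ℕ => |x (m + 1 + 1)|) := (summable_nat_add_iff (f := fun m : ℕ => |x (m + 1)|) 1).mpr hsxa
    have hsplit : S = ε + ∑' m : ℕ, |x (m + 1 + 1)| := by
      rw [hSdef, Summable.tsum_eq_zero_add hsxa, hεdef]
    have hbound : ∑' m : ℕ, |x (m + 1 + 1)| ≤ 6*(κ*(C*(η*S)))/c * ∑' m : ℕ, (1:ℝ)/((m:ℝ)+2)^2 := by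
      rw [← tsum_mul_left]
      apply Summable.tsum_le_tsum _ hsx2 (aux_summable_inv_sq.mul_left _)
      intro m
      have h := hx2 (m + 1 + 1) (by omega)
      have hcast : ((m + 1 + 1:ℕ):ℝ) = (m:ℝ) + 2 := by push_cast; ring
      rw [hcast] at h
      have hpos2 : (0:ℝ) < ((m:ℝ)+2)^2 := by positivity
      rw [show (6*(κ*(C*(η*S)))/c * ((1:ℝ)/((m:ℝ)+2)^2))
          = (6*(κ*(C*(η*S))))/(c*((m:ℝ)+2)^2) by rw [div_mul_div_comm, mul_one]]
      rw [le_div_iff₀ (mul_pos hcpos hpos2)]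
      rw [show |x (m+1+1)| * (c*((m:ℝ)+2)^2) = c*(((m:ℝ)+2)^2 * |x (m+1+1)|) by ring]
      exact h
    have haux := aux_sum_inv_sq_le
    have hnn : (0:ℝ) ≤ 6*(κ*(C*(η*S)))/c := by positivity
    have hb2 : ∑' m : ℕ, |x (m + 1 + 1)| ≤ 6*(κ*(C*(η*S)))/c := by
      calc ∑' m : ℕ, |x (m + 1 + 1)| ≤ 6*(κ*(C*(η*S)))/c * ∑' m : ℕ, (1:ℝ)/((m:ℝ)+2)^2 := hbound
        _ ≤ 6*(κ*(C*(η*S)))/c * 1 := mul_le_mul_of_nonneg_left haux hnn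
        _ = 6*(κ*(C*(η*S)))/c := mul_one _
    -- smallness : 6 κ C η / c ≤ 1/2
    have hsm : 24*κ₁*C*η ≤ c := by
      have h := hη2
      rw [le_div_iff₀ (by positivity)] at h
      linarith only [h]
    have hfrac : 6*(κ*(C*(η*S)))/c ≤ S/2 := by
      rw [div_le_div_iff₀ hcpos two_pos]
      have hCS : (0:ℝ) ≤ C*(η*S) := mul_nonneg hCpos.le (mul_nonneg hηpos.le hS0)
      have e1 : κ*(C*(η*S)) ≤ (2*κ₁)*(C*(η*S)) := mul_le_mul_of_nonneg_right hκ2 hCS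
      have e2 : (24*κ₁*C*η)*S ≤ c*S := mul_le_mul_of_nonneg_right hsm hS0
      linarith only [e1, e2]
    linarith only [hb2, hfrac, hsplit]
  -- abbreviation t and its bounds
  set t : ℝ := D * ε with htdef
  clear_value t
  have ht0 : 0 ≤ t := by rw [htdef]; exact mul_nonneg hDpos.le hε0
  have ht12 : t ≤ 1/2 := by
    have h := mul_le_mul_of_nonneg_left hεη hDpos.le
    have h2 := mul_le_mul_of_nonneg_left hη1 hDpos.le
    have hD0 : D ≠ 0 := ne_of_gt hDpos
    have h3 : D * (1/(2*D)) = 1/2 := by field_simp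
    rw [htdef]; linarith only [h, h2, h3]
  have ht1 : t ≤ 1 := by linarith only [ht12, ht0]
  -- base case
  have hbase : ∀ m : ℕ, 1 ≤ m → (m:ℝ) * |x m| ≤ B * t := by
    intro m hm
    rcases Nat.lt_or_ge m 2 with hm2 | hm2
    · -- m = 1
      have : m = 1 := by omega
      subst this
      have : B * t = 2 * ε := by rw [htdef]; rw [show B*(D*ε) = (B*D)*ε by ring, hBD]
      rw [this, hεdef]
      push_cast
      linarith only [abs_nonneg (x 1)]
    · -- m ≥ 2
      have hk := hkey m hm2
      have hlowb : ∑ j ∈ Finset.Ico 1 m, |x j| * |x (m - j)| ≤ S * S := by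
        calc ∑ j ∈ Finset.Ico 1 m, |x j| * |x (m - j)|
            ≤ ∑ j ∈ Finset.Ico 1 m, |x j| * S := by
              apply Finset.sum_le_sum
              intro j hj
              rw [Finset.mem_Ico] at hj
              exact mul_le_mul_of_nonneg_left (hiS (m - j) (by omega)) (abs_nonneg _)
          _ = (∑ j ∈ Finset.Ico 1 m, |x j|) * S := by rw [Finset.sum_mul]
          _ ≤ S * S := mul_le_mul_of_nonneg_right (hfin m) hS0
      have htailb : ∑' k : ℕ, |x (m + k + 1)| * |x (k + 1)| ≤ S * S := by
        calc ∑' k : ℕ, |x (m + k + 1)| * |x (k + 1)|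
            ≤ ∑' k : ℕ, S * |x (k + 1)| := by
              apply Summable.tsum_le_tsum _ (htsum m (by omega)) (hsxa.mul_left _)
              intro k
              exact mul_le_mul_of_nonneg_right (hiS (m + k + 1) (by omega)) (abs_nonneg _)
          _ = S * S := by rw [tsum_mul_left, hSdef]
      have hcm : c * ((m:ℝ) * |x m|) ≤ 3*(κ*(C*(S*S))) := by
        calc c * ((m:ℝ) * |x m|)
            ≤ κ * (C * ∑ j ∈ Finset.Ico 1 m, |x j| * |x (m - j)|)
              + κ * (2 * C * ∑' k : ℕ, |x (m + k + 1)| * |x (k + 1)|) := hk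
          _ ≤ κ * (C * (S*S)) + κ * (2 * C * (S*S)) := by
              refine add_le_add ?_ ?_
              · exact mul_le_mul_of_nonneg_left (mul_le_mul_of_nonneg_left hlowb hCpos.le) hκpos.le
              · refine mul_le_mul_of_nonneg_left ?_ hκpos.le
                exact mul_le_mul_of_nonneg_left htailb (by positivity)
          _ = 3*(κ*(C*(S*S))) := by ring
      have hsm : 24*κ₁*C*η ≤ c := by
        have h := hη2
        rw [le_div_iff₀ (by positivity)] at h
        linarith only [h]
      have hquad : 3*(κ*(C*(S*S))) ≤ c * (2 * ε) := by
        have hSS : S * S ≤ (2*ε)*(2*ε) := mul_le_mul hS2ε hS2ε hS0 (by linarith only [hε0])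
        have e1 : 3*(κ*(C*(S*S))) ≤ 3*(κ*(C*((2*ε)*(2*ε)))) := by
          refine mul_le_mul_of_nonneg_left ?_ (by norm_num)
          exact mul_le_mul_of_nonneg_left (mul_le_mul_of_nonneg_left hSS hCpos.le) hκpos.le
        have e2 : 3*(κ*(C*((2*ε)*(2*ε)))) ≤ 3*((2*κ₁)*(C*((2*ε)*(2*ε)))) := by
          refine mul_le_mul_of_nonneg_left ?_ (by norm_num)
          apply mul_le_mul_of_nonneg_right hκ2 (by positivity)
        have e3 : 3*((2*κ₁)*(C*((2*ε)*(2*ε)))) = 24*κ₁*C*ε*ε := by ring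
        have e4 : 24*κ₁*C*ε*ε ≤ (24*κ₁*C*η)*ε :=
          mul_le_mul_of_nonneg_right
            (mul_le_mul_of_nonneg_left hεη (by positivity : (0:ℝ) ≤ 24*κ₁*C)) hε0
        have e5 : (24*κ₁*C*η)*ε ≤ c*ε := mul_le_mul_of_nonneg_right hsm hε0
        have e6 : c*ε ≤ c*(2*ε) :=
          mul_le_mul_of_nonneg_left (by linarith only [hε0]) hcpos.le
        linarith only [e1, e2, e3, e4, e5, e6]
      have : c * ((m:ℝ) * |x m|) ≤ c * (2*ε) := le_trans hcm hquad
      have h7 := le_of_mul_le_mul_left this hcpos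
      have h8 : B * t = 2 * ε := by rw [htdef]; rw [show B*(D*ε) = (B*D)*ε by ring, hBD]
      linarith only [h7, h8]
  -- global nonzero fact
  have hD0 : D ≠ 0 := ne_of_gt hDpos
  -- MAIN INDUCTION
  have hP : ∀ n : ℕ, ∀ m : ℕ, 1 ≤ m → (m:ℝ) * |x m| ≤ B * t ^ (min m (n+1)) := by
    intro n
    induction n with
    | zero =>
      intro m hm
      have hmin : min m 1 = 1 := by omega
      rw [hmin, pow_one]
      exact hbase m hm
    | succ n ih =>
      intro m hm
      by_cases hmn : m ≤ n + 1
      · have hmin : min m (n+1+1) = min m (n+1) := by omega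
        rw [hmin]; exact ih m hm
      · push_neg at hmn
        have hm2 : 2 ≤ m := by omega
        have hmin : min m (n+1+1) = n+2 := by omega
        rw [hmin]
        have htn2 : (0:ℝ) ≤ t^(n+2) := pow_nonneg ht0 _
        have hm0 : (0:ℝ) < (m:ℝ) := by exact_mod_cast (by omega : 0 < m)
        -- low-frequency bound
        have hlow : ∑ j ∈ Finset.Ico 1 m, |x j| * |x (m - j)| ≤ 2*B^2*t^(n+2) := by
          have hterm : ∀ j ∈ Finset.Ico 1 m,
              |x j| * |x (m - j)| ≤ B^2*t^(n+2) * (2/(m:ℝ)) := by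
            intro j hj
            rw [Finset.mem_Ico] at hj
            have hj1 : 1 ≤ j := hj.1
            have hjm : j < m := hj.2
            have hmj1 : 1 ≤ m - j := by omega
            have hju : (1:ℝ) ≤ (j:ℝ) := by exact_mod_cast hj1
            have hjv : (1:ℝ) ≤ ((m-j:ℕ):ℝ) := by exact_mod_cast hmj1
            have hcsum : (j:ℝ) + ((m-j:ℕ):ℝ) = (m:ℝ) := by
              have h9 : j + (m - j) = m := by omega
              exact_mod_cast h9
            have hprod : ((j:ℝ) * |x j|) * (((m-j:ℕ):ℝ) * |x (m - j)|)
                ≤ (B * t ^ (min j (n+1))) * (B * t ^ (min (m-j) (n+1))) := by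
              apply mul_le_mul (ih j hj1) (ih (m-j) hmj1) (by positivity) (by positivity)
            have hE : n + 2 ≤ min j (n+1) + min (m-j) (n+1) := by omega
            have hpow : t ^ (min j (n+1)) * t ^ (min (m-j) (n+1)) ≤ t^(n+2) := by
              rw [← pow_add]
              exact pow_le_pow_of_le_one ht0 ht1 hE
            have hprod2 : ((j:ℝ)*((m-j:ℕ):ℝ)) * (|x j| * |x (m - j)|) ≤ B^2 * t^(n+2) := by
              calc ((j:ℝ)*((m-j:ℕ):ℝ)) * (|x j| * |x (m - j)|)
                  = ((j:ℝ) * |x j|) * (((m-j:ℕ):ℝ) * |x (m - j)|) := by ring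
                _ ≤ (B * t ^ (min j (n+1))) * (B * t ^ (min (m-j) (n+1))) := hprod
                _ = B^2 * (t ^ (min j (n+1)) * t ^ (min (m-j) (n+1))) := by ring
                _ ≤ B^2 * t^(n+2) := by
                    apply mul_le_mul_of_nonneg_left hpow (by positivity)
            have hP0 : 0 ≤ |x j| * |x (m - j)| := mul_nonneg (abs_nonneg _) (abs_nonneg _)
            have hm2c : (2:ℝ) ≤ (m:ℝ) := by exact_mod_cast hm2
            have huv : (m:ℝ)/2 ≤ (j:ℝ)*((m-j:ℕ):ℝ) := by
              linarith only [mul_nonneg (sub_nonneg.mpr hju) (sub_nonneg.mpr hjv), hcsum, hm2c]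
            have h2' : (m:ℝ)/2 * (|x j| * |x (m - j)|) ≤ B^2*t^(n+2) :=
              le_trans (mul_le_mul_of_nonneg_right huv hP0) hprod2
            rw [show B^2*t^(n+2)*(2/(m:ℝ)) = B^2*t^(n+2)*2/(m:ℝ) from (mul_div_assoc _ _ _).symm,
              le_div_iff₀ hm0]
            linarith only [h2']
          calc ∑ j ∈ Finset.Ico 1 m, |x j| * |x (m - j)|
              ≤ (Finset.Ico 1 m).card • (B^2*t^(n+2) * (2/(m:ℝ))) :=
                Finset.sum_le_card_nsmul _ _ _ hterm
            _ = ((m-1:ℕ):ℝ) * (B^2*t^(n+2) * (2/(m:ℝ))) := by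
                rw [Nat.card_Ico, nsmul_eq_mul]
            _ ≤ 2*B^2*t^(n+2) := by
                have hcast : ((m-1:ℕ):ℝ) ≤ (m:ℝ) := by exact_mod_cast Nat.sub_le m 1
                calc ((m-1:ℕ):ℝ) * (B^2*t^(n+2) * (2/(m:ℝ)))
                    = 2*(B^2*t^(n+2)) * (((m-1:ℕ):ℝ)/(m:ℝ)) := by ring
                  _ ≤ 2*(B^2*t^(n+2)) * 1 := by
                      apply mul_le_mul_of_nonneg_left _ (by positivity)
                      rw [div_le_one hm0]; exact hcast
                  _ = 2*B^2*t^(n+2) := by ring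
        -- tail bound
        have htailb : ∑' k : ℕ, |x (m + k + 1)| * |x (k + 1)| ≤ (2*B/D)*t^(n+2) := by
          have hterm : ∀ k : ℕ, |x (m + k + 1)| * |x (k + 1)| ≤ (B*t^(n+1)) * |x (k + 1)| := by
            intro k
            apply mul_le_mul_of_nonneg_right _ (abs_nonneg _)
            have hik := ih (m + k + 1) (by omega)
            have hminik : min (m + k + 1) (n+1) = n+1 := by omega
            rw [hminik] at hik
            have h1k : (1:ℝ) ≤ ((m+k+1:ℕ):ℝ) := by
              exact_mod_cast (by omega : 1 ≤ m+k+1)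
            calc |x (m + k + 1)| = 1 * |x (m + k + 1)| := (one_mul _).symm
              _ ≤ ((m+k+1:ℕ):ℝ) * |x (m + k + 1)| :=
                  mul_le_mul_of_nonneg_right h1k (abs_nonneg _)
              _ ≤ B*t^(n+1) := hik
          calc ∑' k : ℕ, |x (m + k + 1)| * |x (k + 1)|
              ≤ ∑' k : ℕ, (B*t^(n+1)) * |x (k + 1)| :=
                Summable.tsum_le_tsum hterm (htsum m (by omega)) (hsxa.mul_left _)
            _ = (B*t^(n+1)) * S := by rw [tsum_mul_left, hSdef]
            _ ≤ (B*t^(n+1)) * (2*ε) := by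
                apply mul_le_mul_of_nonneg_left hS2ε (by positivity)
            _ = (2*B/D)*t^(n+2) := by
                rw [pow_succ, htdef]
                field_simp
                ring
        -- combine
        have hk := hkey m hm2
        have hc1 : κ*(C*(2*B^2)) + κ*(2*C*(2*B/D)) ≤ 2*κ₁*(C*(2*B^2)) + 2*κ₁*(2*C*(2*B/D)) := by
          have hA1 : (0:ℝ) ≤ C*(2*B^2) := by positivity
          have hA2 : (0:ℝ) ≤ 2*C*(2*B/D) := by positivity
          have e1 := mul_le_mul_of_nonneg_right hκ2 hA1
          have e2 := mul_le_mul_of_nonneg_right hκ2 hA2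
          linarith only [e1, e2]
        have hc2 : 2*κ₁*(C*(2*B^2)) + 2*κ₁*(2*C*(2*B/D)) = c*B := by
          have h₁ : κ₁ ≠ 0 := ne_of_gt hκ₁pos
          have h₂ : C ≠ 0 := ne_of_gt hCpos
          have h₃ : c ≠ 0 := ne_of_gt hcpos
          rw [hBdef, hDdef]
          field_simp
          ring
        have hfinalc : c * ((m:ℝ)*|x m|) ≤ c * (B * t^(n+2)) := by
          calc c * ((m:ℝ)*|x m|)
              ≤ κ * (C * (2*B^2*t^(n+2))) + κ * (2*C*((2*B/D)*t^(n+2))) := by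
                refine le_trans hk (add_le_add ?_ ?_)
                · refine mul_le_mul_of_nonneg_left ?_ hκpos.le
                  rw [show C * (2*B^2*t^(n+2)) = C * (2*B^2*t^(n+2)) from rfl]
                  exact mul_le_mul_of_nonneg_left hlow hCpos.le
                · refine mul_le_mul_of_nonneg_left ?_ hκpos.le
                  exact mul_le_mul_of_nonneg_left htailb (by positivity)
            _ = (κ*(C*(2*B^2)) + κ*(2*C*(2*B/D))) * t^(n+2) := by ring
            _ ≤ (c*B) * t^(n+2) :=
                mul_le_mul_of_nonneg_right (le_trans hc1 (le_of_eq hc2)) htn2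
            _ = c * (B * t^(n+2)) := by ring
        exact le_of_mul_le_mul_left hfinalc hcpos
  -- geometric bound
  have hgeo : ∀ m : ℕ, 1 ≤ m → (m:ℝ) * |x m| ≤ B * t ^ m := by
    intro m hm
    have h := hP m m hm
    rwa [show min m (m+1) = m by omega] at h
  have hgeo' : ∀ m : ℕ, 1 ≤ m → |x m| ≤ B * t ^ m := by
    intro m hm
    have h1m : (1:ℝ) ≤ (m:ℝ) := by exact_mod_cast hm
    calc |x m| = 1 * |x m| := (one_mul _).symm
      _ ≤ (m:ℝ) * |x m| := mul_le_mul_of_nonneg_right h1m (abs_nonneg _)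
      _ ≤ B * t ^ m := hgeo m hm
  -- CONCLUSIONS
  intro ℓ hℓ
  have hℓ0 : (0:ℝ) < (ℓ:ℝ) := by exact_mod_cast (by omega : 0 < ℓ)
  constructor
  · -- (i)
    have h := hgeo ℓ hℓ
    rw [div_mul_eq_mul_div, le_div_iff₀ hℓ0]
    have h9 : B*t^ℓ ≤ D₁*t^ℓ := mul_le_mul_of_nonneg_right hBD₁ (pow_nonneg ht0 ℓ)
    calc |x ℓ| * (ℓ:ℝ) = (ℓ:ℝ) * |x ℓ| := mul_comm _ _
      _ ≤ B * t ^ ℓ := h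
      _ ≤ D₁ * t ^ ℓ := h9
  · -- (ii)
    obtain ⟨hsml, heq⟩ := hsol ℓ hℓ
    have hrw2 : (ℓ:ℝ) * (2 - κ * a ℓ) * x ℓ
        - κ * ∑ j ∈ Finset.Ico 1 ℓ, (j:ℝ) * a j * x j * x (ℓ - j)
        = κ * ∑' k : ℕ, (((ℓ + k + 1 : ℕ) : ℝ) * a (ℓ + k + 1)
            - ((k + 1 : ℕ) : ℝ) * a (k + 1)) * x (ℓ + k + 1) * x (k + 1) := by
      rw [heq]; ring
    rw [hrw2, abs_mul, abs_of_pos hκpos]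
    have h2 := htail ℓ hℓ
    have ht2q : t^2 ≤ 1/4 := by
      have h9 : t*t ≤ (1/2)*(1/2) := mul_le_mul ht12 ht12 ht0 (by norm_num)
      linarith only [h9]
    have ht2lt : t^2 < 1 := by linarith only [ht2q]
    have htailgeo : ∑' k : ℕ, |x (ℓ + k + 1)| * |x (k + 1)| ≤ 2*B^2*t^(ℓ+2) := by
      have hterm : ∀ k : ℕ, |x (ℓ + k + 1)| * |x (k + 1)| ≤ (B^2*t^(ℓ+2)) * (t^2)^k := by
        intro k
        have e1 := hgeo' (ℓ + k + 1) (by omega)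
        have e2 := hgeo' (k + 1) (by omega)
        calc |x (ℓ + k + 1)| * |x (k + 1)| ≤ (B * t^(ℓ+k+1)) * (B * t^(k+1)) :=
              mul_le_mul e1 e2 (abs_nonneg _) (by positivity)
          _ = (B^2*t^(ℓ+2)) * (t^2)^k := by ring
      have hgsum : Summable (fun k : ℕ => (B^2*t^(ℓ+2)) * (t^2)^k) :=
        Summable.mul_left _ (summable_geometric_of_lt_one (by positivity) ht2lt)
      calc ∑' k : ℕ, |x (ℓ + k + 1)| * |x (k + 1)|
          ≤ ∑' k : ℕ, (B^2*t^(ℓ+2)) * (t^2)^k := Summable.tsum_le_tsum hterm (htsum ℓ hℓ) hgsum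
        _ = (B^2*t^(ℓ+2)) * ∑' k : ℕ, (t^2)^k := tsum_mul_left
        _ = (B^2*t^(ℓ+2)) * (1-t^2)⁻¹ := by
            rw [tsum_geometric_of_lt_one (by positivity) ht2lt]
        _ ≤ (B^2*t^(ℓ+2)) * 2 := by
            apply mul_le_mul_of_nonneg_left _ (by positivity)
            rw [← one_div, div_le_iff₀ (by linarith only [ht2q] : (0:ℝ) < 1 - t^2)]
            linarith only [ht2q]
        _ = 2*B^2*t^(ℓ+2) := by ring
    calc κ * |∑' k : ℕ, (((ℓ + k + 1 : ℕ) : ℝ) * a (ℓ + k + 1)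
            - ((k + 1 : ℕ) : ℝ) * a (k + 1)) * x (ℓ + k + 1) * x (k + 1)|
        ≤ κ * (2 * C * ∑' k : ℕ, |x (ℓ + k + 1)| * |x (k + 1)|) :=
          mul_le_mul_of_nonneg_left h2 hκpos.le
      _ ≤ κ * (2 * C * (2*B^2*t^(ℓ+2))) := by
          refine mul_le_mul_of_nonneg_left ?_ hκpos.le
          exact mul_le_mul_of_nonneg_left htailgeo (by positivity)
      _ ≤ (2*κ₁) * (2 * C * (2*B^2*t^(ℓ+2))) := by
          apply mul_le_mul_of_nonneg_right hκ2 (by positivity)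
      _ = (8*κ₁*C*B^2) * t^(ℓ+2) := by ring
      _ ≤ D₁ * t^(ℓ+2) := by
          apply mul_le_mul_of_nonneg_right _ (pow_nonneg ht0 _)
          rw [hD₁def]
          linarith only [hBpos]
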